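/- Let X and Y be radical objects of C₂(P) and Z a contractible object of C₂(P). If there exists a short exact sequence 0 → Y → Z → X → 0 in C₂(P), then Y ≅ X^* in C₂(P) and Z ≅ K_{X¹} ⊕ K^*_{X⁰}. -/

import Mathlib

open CategoryTheory

universe u

noncomputable section

variable (R : Type u) [Ring R]

structure TwoCx : Type (u + 1) where
  X1 : ModuleCat.{u} R
  X0 : ModuleCat.{u} R
  fin1 : Module.Finite R X1
  proj1 : Module.Projective R X1
  fin0 : Module.Finite R X0
  proj0 : Module.Projective R X0
  d1 : X1 ⟶ X0
  d0 : X0 ⟶ X1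
  dd1 : d1 ≫ d0 = 0
  dd0 : d0 ≫ d1 = 0

variable {R}

@[ext]
structure TwoHom (X Y : TwoCx R) : Type u where
  f1 : X.X1 ⟶ Y.X1
  f0 : X.X0 ⟶ Y.X0
  comm1 : X.d1 ≫ f0 = f1 ≫ Y.d1
  comm0 : X.d0 ≫ f1 = f0 ≫ Y.d0

instance : CategoryStruct (TwoCx R) where
  Hom := TwoHom
  id X := ⟨𝟙 X.X1, 𝟙 X.X0, by simp, by simp⟩
  comp {X Y Z} f g :=
    ⟨f.f1 ≫ g.f1, f.f0 ≫ g.f0, by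
      rw [← Category.assoc, f.comm1, Category.assoc, g.comm1, ← Category.assoc], by
      rw [← Category.assoc, f.comm0, Category.assoc, g.comm0, ← Category.assoc]⟩

@[simp] theorem id_f1 (X : TwoCx R) : TwoHom.f1 (𝟙 X) = 𝟙 X.X1 := rfl
@[simp] theorem id_f0 (X : TwoCx R) : TwoHom.f0 (𝟙 X) = 𝟙 X.X0 := rfl
@[simp] theorem comp_f1 {X Y Z : TwoCx R} (f : X ⟶ Y) (g : Y ⟶ Z) :
    TwoHom.f1 (f ≫ g) = TwoHom.f1 f ≫ TwoHom.f1 g := rfl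
@[simp] theorem comp_f0 {X Y Z : TwoCx R} (f : X ⟶ Y) (g : Y ⟶ Z) :
    TwoHom.f0 (f ≫ g) = TwoHom.f0 f ≫ TwoHom.f0 g := rfl

@[ext] theorem hom_ext {X Y : TwoCx R} {f g : X ⟶ Y}
    (h1 : TwoHom.f1 f = TwoHom.f1 g) (h0 : TwoHom.f0 f = TwoHom.f0 g) : f = g :=
  TwoHom.ext h1 h0

instance : Category (TwoCx R) where
  id_comp f := by ext <;> simp
  comp_id f := by ext <;> simp
  assoc f g h := by ext <;> simp

section HomGroup

variable {X Y : TwoCx R}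

instance : Zero (X ⟶ Y) :=
  ⟨TwoHom.mk 0 0 (by simp) (by simp)⟩

@[simp] theorem zero_f1 : TwoHom.f1 (0 : X ⟶ Y) = 0 := rfl
@[simp] theorem zero_f0 : TwoHom.f0 (0 : X ⟶ Y) = 0 := rfl

instance : Add (X ⟶ Y) :=
  ⟨fun f g => TwoHom.mk (f.f1 + g.f1) (f.f0 + g.f0)
    (by rw [Preadditive.comp_add, f.comm1, g.comm1, ← Preadditive.add_comp])
    (by rw [Preadditive.comp_add, f.comm0, g.comm0, ← Preadditive.add_comp])⟩

@[simp] theorem add_f1 (f g : X ⟶ Y) :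
    TwoHom.f1 (f + g) = TwoHom.f1 f + TwoHom.f1 g := rfl
@[simp] theorem add_f0 (f g : X ⟶ Y) :
    TwoHom.f0 (f + g) = TwoHom.f0 f + TwoHom.f0 g := rfl

instance : Neg (X ⟶ Y) :=
  ⟨fun f => TwoHom.mk (-f.f1) (-f.f0)
    (by rw [Preadditive.comp_neg, f.comm1, ← Preadditive.neg_comp])
    (by rw [Preadditive.comp_neg, f.comm0, ← Preadditive.neg_comp])⟩

@[simp] theorem neg_f1 (f : X ⟶ Y) : TwoHom.f1 (-f) = -TwoHom.f1 f := rfl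
@[simp] theorem neg_f0 (f : X ⟶ Y) : TwoHom.f0 (-f) = -TwoHom.f0 f := rfl

instance : AddCommGroup (X ⟶ Y) where
  add := (· + ·)
  zero := 0
  neg := Neg.neg
  add_assoc a b c := by ext <;> simp [add_assoc]
  zero_add a := by ext <;> simp
  add_zero a := by ext <;> simp
  add_comm a b := by ext <;> simp [add_comm]
  neg_add_cancel a := by ext <;> simp
  nsmul := nsmulRec
  zsmul := zsmulRec

@[simp] theorem sub_f1 (f g : X ⟶ Y) :
    TwoHom.f1 (f - g) = TwoHom.f1 f - TwoHom.f1 g := by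
  show TwoHom.f1 (f + -g) = _
  rw [add_f1, neg_f1, sub_eq_add_neg]

@[simp] theorem sub_f0 (f g : X ⟶ Y) :
    TwoHom.f0 (f - g) = TwoHom.f0 f - TwoHom.f0 g := by
  show TwoHom.f0 (f + -g) = _
  rw [add_f0, neg_f0, sub_eq_add_neg]

end HomGroup

instance : Preadditive (TwoCx R) where
  add_comp := by intros; ext <;> simp
  comp_add := by intros; ext <;> simp

def Homotopic {X Y : TwoCx R} (f g : X ⟶ Y) : Prop :=
  ∃ (h1 : X.X1 ⟶ Y.X0) (h0 : X.X0 ⟶ Y.X1),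
    TwoHom.f1 f - TwoHom.f1 g = h1 ≫ Y.d0 + X.d1 ≫ h0 ∧
    TwoHom.f0 f - TwoHom.f0 g = h0 ≫ Y.d1 + X.d0 ≫ h1

def Contractible (X : TwoCx R) : Prop := Homotopic (𝟙 X) (0 : X ⟶ X)

def IsHtpEquiv {X Y : TwoCx R} (f : X ⟶ Y) : Prop :=
  ∃ g : Y ⟶ X, Homotopic (f ≫ g) (𝟙 X) ∧ Homotopic (g ≫ f) (𝟙 Y)

def HtpEquiv (X Y : TwoCx R) : Prop := ∃ f : X ⟶ Y, IsHtpEquiv f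

def modRad (M : ModuleCat.{u} R) : Submodule R M :=
  sInf {N : Submodule R M | IsCoatom N}

def RadicalCx (X : TwoCx R) : Prop :=
  LinearMap.range X.d1.hom ≤ modRad X.X0 ∧ LinearMap.range X.d0.hom ≤ modRad X.X1

def dsum (X Y : TwoCx R) : TwoCx R where
  X1 := ModuleCat.of R (X.X1 × Y.X1)
  X0 := ModuleCat.of R (X.X0 × Y.X0)
  fin1 := by haveI := X.fin1; haveI := Y.fin1; exact (inferInstance : Module.Finite R (X.X1 × Y.X1))
  proj1 := by haveI := X.proj1; haveI := Y.proj1; exact (inferInstance : Module.Projective R (X.X1 × Y.X1))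
  fin0 := by haveI := X.fin0; haveI := Y.fin0; exact (inferInstance : Module.Finite R (X.X0 × Y.X0))
  proj0 := by haveI := X.proj0; haveI := Y.proj0; exact (inferInstance : Module.Projective R (X.X0 × Y.X0))
  d1 := ModuleCat.ofHom (LinearMap.prodMap X.d1.hom Y.d1.hom)
  d0 := ModuleCat.ofHom (LinearMap.prodMap X.d0.hom Y.d0.hom)
  dd1 := by
    have h1 : LinearMap.comp X.d0.hom X.d1.hom = 0 := by rw [← ModuleCat.hom_comp, X.dd1, ModuleCat.hom_zero]
    have h2 : LinearMap.comp Y.d0.hom Y.d1.hom = 0 := by rw [← ModuleCat.hom_comp, Y.dd1, ModuleCat.hom_zero]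
    apply ModuleCat.hom_ext
    show LinearMap.comp (LinearMap.prodMap X.d0.hom Y.d0.hom) (LinearMap.prodMap X.d1.hom Y.d1.hom) = 0
    rw [LinearMap.prodMap_comp, h1, h2, LinearMap.prodMap_zero]
  dd0 := by
    have h1 : LinearMap.comp X.d1.hom X.d0.hom = 0 := by rw [← ModuleCat.hom_comp, X.dd0, ModuleCat.hom_zero]
    have h2 : LinearMap.comp Y.d1.hom Y.d0.hom = 0 := by rw [← ModuleCat.hom_comp, Y.dd0, ModuleCat.hom_zero]
    apply ModuleCat.hom_ext
    show LinearMap.comp (LinearMap.prodMap X.d1.hom Y.d1.hom) (LinearMap.prodMap X.d0.hom Y.d0.hom) = 0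
    rw [LinearMap.prodMap_comp, h1, h2, LinearMap.prodMap_zero]

def kP (P : ModuleCat.{u} R) (h1 : Module.Finite R P) (h2 : Module.Projective R P) : TwoCx R :=
  ⟨P, P, h1, h2, h1, h2, 𝟙 P, 0, by simp, by simp⟩

def kS (P : ModuleCat.{u} R) (h1 : Module.Finite R P) (h2 : Module.Projective R P) : TwoCx R :=
  ⟨P, P, h1, h2, h1, h2, 0, 𝟙 P, by simp, by simp⟩

def starCx (X : TwoCx R) : TwoCx R :=
  ⟨X.X0, X.X1, X.fin0, X.proj0, X.fin1, X.proj1, -X.d0, -X.d1,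
    by simp [X.dd0], by simp [X.dd1]⟩

-- ## The homotopy category
variable (R) in
def htpRel : HomRel (TwoCx R) := fun _ _ f g => Homotopic f g

abbrev KTwo (R : Type u) [Ring R] := CategoryTheory.Quotient (htpRel R)

def KFun (R : Type u) [Ring R] : TwoCx R ⥤ KTwo R := Quotient.functor _

-- ## Short exact sequences
structure SESData (Y Z X : TwoCx R) where
  a : Y ⟶ Z
  b : Z ⟶ X
  inj1 : Function.Injective (TwoHom.f1 a)
  inj0 : Function.Injective (TwoHom.f0 a)
  surj1 : Function.Surjective (TwoHom.f1 b)
  surj0 : Function.Surjective (TwoHom.f0 b)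
  exact1 : LinearMap.range (TwoHom.f1 a).hom = LinearMap.ker (TwoHom.f1 b).hom
  exact0 : LinearMap.range (TwoHom.f0 a).hom = LinearMap.ker (TwoHom.f0 b).hom

def SESEquiv {Y X Z Z' : TwoCx R} (s : SESData Y Z X) (t : SESData Y Z' X) : Prop :=
  ∃ e : Z ≅ Z', s.a ≫ e.hom = t.a ∧ e.hom ≫ t.b = s.b

/-- The two components of a morphism `X ⟶ Y^*`, with their natural types. -/
def sf1 {X Y : TwoCx R} (f : X ⟶ starCx Y) : X.X1 →ₗ[R] Y.X0 := (TwoHom.f1 f).hom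
def sf0 {X Y : TwoCx R} (f : X ⟶ starCx Y) : X.X0 →ₗ[R] Y.X1 := (TwoHom.f0 f).hom

-- ## The middle term associated to `f : X ⟶ Y^*`
def coneCx {X Y : TwoCx R} (f : X ⟶ starCx Y) : TwoCx R where
  X1 := ModuleCat.of R (X.X1 × Y.X1)
  X0 := ModuleCat.of R (X.X0 × Y.X0)
  fin1 := by haveI := X.fin1; haveI := Y.fin1; exact (inferInstance : Module.Finite R (X.X1 × Y.X1))
  proj1 := by haveI := X.proj1; haveI := Y.proj1; exact (inferInstance : Module.Projective R (X.X1 × Y.X1))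
  fin0 := by haveI := X.fin0; haveI := Y.fin0; exact (inferInstance : Module.Finite R (X.X0 × Y.X0))
  proj0 := by haveI := X.proj0; haveI := Y.proj0; exact (inferInstance : Module.Projective R (X.X0 × Y.X0))
  d1 := ModuleCat.ofHom (LinearMap.prod (X.d1.hom ∘ₗ LinearMap.fst R X.X1 Y.X1)
    (Y.d1.hom ∘ₗ LinearMap.snd R X.X1 Y.X1 - sf1 f ∘ₗ LinearMap.fst R X.X1 Y.X1))
  d0 := ModuleCat.ofHom (LinearMap.prod (X.d0.hom ∘ₗ LinearMap.fst R X.X0 Y.X0)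
    (Y.d0.hom ∘ₗ LinearMap.snd R X.X0 Y.X0 - sf0 f ∘ₗ LinearMap.fst R X.X0 Y.X0))
  dd1 := by
    refine ModuleCat.hom_ext (LinearMap.ext fun p => Prod.ext ?_ ?_)
    · show X.d0.hom (X.d1.hom p.1) = 0
      exact DFunLike.congr_fun (congrArg ModuleCat.Hom.hom X.dd1) p.1
    · show Y.d0.hom (Y.d1.hom p.2 - sf1 f p.1) - sf0 f (X.d1.hom p.1) = 0
      have hY : Y.d0.hom (Y.d1.hom p.2) = 0 := DFunLike.congr_fun (congrArg ModuleCat.Hom.hom Y.dd1) p.2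
      have hc : sf0 f (X.d1.hom p.1) = -(Y.d0.hom (sf1 f p.1)) := DFunLike.congr_fun (congrArg ModuleCat.Hom.hom f.comm1) p.1
      rw [map_sub, hY, hc]
      simp
  dd0 := by
    refine ModuleCat.hom_ext (LinearMap.ext fun p => Prod.ext ?_ ?_)
    · show X.d1.hom (X.d0.hom p.1) = 0
      exact DFunLike.congr_fun (congrArg ModuleCat.Hom.hom X.dd0) p.1
    · show Y.d1.hom (Y.d0.hom p.2 - sf0 f p.1) - sf1 f (X.d0.hom p.1) = 0
      have hY : Y.d1.hom (Y.d0.hom p.2) = 0 := DFunLike.congr_fun (congrArg ModuleCat.Hom.hom Y.dd0) p.2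
      have hc : sf1 f (X.d0.hom p.1) = -(Y.d1.hom (sf0 f p.1)) := DFunLike.congr_fun (congrArg ModuleCat.Hom.hom f.comm0) p.1
      rw [map_sub, hY, hc]
      simp

/-- The canonical inclusion `Y ⟶ Z_f`. -/
def coneIn {X Y : TwoCx R} (f : X ⟶ starCx Y) : Y ⟶ coneCx f where
  f1 := ModuleCat.ofHom (LinearMap.inr R X.X1 Y.X1)
  f0 := ModuleCat.ofHom (LinearMap.inr R X.X0 Y.X0)
  comm1 := by
    refine ModuleCat.hom_ext (LinearMap.ext fun y => Prod.ext ?_ ?_)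
    · show (0 : X.X0) = X.d1.hom 0
      simp
    · show Y.d1.hom y = Y.d1.hom y - sf1 f 0
      simp
  comm0 := by
    refine ModuleCat.hom_ext (LinearMap.ext fun y => Prod.ext ?_ ?_)
    · show (0 : X.X1) = X.d0.hom 0
      simp
    · show Y.d0.hom y = Y.d0.hom y - sf0 f 0
      simp

/-- The canonical projection `Z_f ⟶ X`. -/
def coneOut {X Y : TwoCx R} (f : X ⟶ starCx Y) : coneCx f ⟶ X where
  f1 := ModuleCat.ofHom (LinearMap.fst R X.X1 Y.X1)
  f0 := ModuleCat.ofHom (LinearMap.fst R X.X0 Y.X0)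
  comm1 := ModuleCat.hom_ext (LinearMap.ext fun _ => rfl)
  comm0 := ModuleCat.hom_ext (LinearMap.ext fun _ => rfl)

/-- The canonical short exact sequence `0 ⟶ Y ⟶ Z_f ⟶ X ⟶ 0`. -/
def canonSES {X Y : TwoCx R} (f : X ⟶ starCx Y) : SESData Y (coneCx f) X where
  a := coneIn f
  b := coneOut f
  inj1 := LinearMap.inr_injective
  inj0 := LinearMap.inr_injective
  surj1 := LinearMap.fst_surjective
  surj0 := LinearMap.fst_surjective
  exact1 := LinearMap.range_inr R X.X1 Y.X1
  exact0 := LinearMap.range_inr R X.X0 Y.X0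

-- ## scalar endomorphisms
def scalarMod [Algebra ℂ R] (c : ℂ) (M : ModuleCat.{u} R) : M ⟶ M :=
  ModuleCat.ofHom
  { toFun := fun m => algebraMap ℂ R c • m
    map_add' := fun x y => smul_add _ x y
    map_smul' := fun r m => by
      simp only [RingHom.id_apply, smul_smul, Algebra.commutes] }

def scalarHom [Algebra ℂ R] (c : ℂ) (X : TwoCx R) : X ⟶ X where
  f1 := scalarMod c X.X1
  f0 := scalarMod c X.X0
  comm1 := by
    refine ModuleCat.hom_ext (LinearMap.ext fun x => ?_)
    exact (map_smul X.d1.hom (algebraMap ℂ R c) x).symm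
  comm0 := by
    refine ModuleCat.hom_ext (LinearMap.ext fun x => ?_)
    exact (map_smul X.d0.hom (algebraMap ℂ R c) x).symm

end

-- ## Auxiliary lemmas for statement 8

noncomputable section Statement8Helpers

open Function

variable {R : Type u} [Ring R]

/-- The radical is contained in the preimage of any coatom. -/
lemma modRad_le_comap {M N : ModuleCat.{u} R} (f : M →ₗ[R] N) {C : Submodule R N}
    (hC : IsCoatom C) : modRad M ≤ C.comap f := by
  by_cases htop : C.comap f = ⊤
  · rw [htop]; exact le_top
  · refine sInf_le ?_
    refine ⟨htop, fun D hD => ?_⟩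
    have hnle : ¬ D.map f ≤ C := by
      intro hle
      exact (not_le_of_gt hD) fun d hd => Submodule.mem_comap.2 (hle ⟨d, hd, rfl⟩)
    have hsup : C ⊔ D.map f = ⊤ := hC.2 _ (left_lt_sup.2 hnle)
    rw [eq_top_iff]
    intro m _
    have hm : f m ∈ C ⊔ D.map f := by rw [hsup]; trivial
    obtain ⟨c, hc, y, hy, hcy⟩ := Submodule.mem_sup.1 hm
    obtain ⟨d, hd, rfl⟩ := hy
    have : m - d ∈ D := by
      refine hD.le (Submodule.mem_comap.2 ?_)
      have : f (m - d) = c := by rw [map_sub, ← hcy]; abel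
      rw [this]; exact hc
    simpa using D.add_mem this hd

/-- Linear maps preserve the radical. -/
lemma map_mem_modRad {M N : ModuleCat.{u} R} (f : M →ₗ[R] N) {x : M}
    (hx : x ∈ modRad M) : f x ∈ modRad N := by
  have : ∀ C ∈ {N' : Submodule R N | IsCoatom N'}, f x ∈ C := fun C hC =>
    Submodule.mem_comap.1 (modRad_le_comap f hC hx)
  simpa [modRad, Submodule.mem_sInf] using this

/-- Nakayama-type lemma. -/
lemma nakayama_modRad [Algebra ℂ R] [FiniteDimensional ℂ R] {M : ModuleCat.{u} R}
    (hfin : Module.Finite R M) {N : Submodule R M} (h : N ⊔ modRad M = ⊤) : N = ⊤ := by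
  letI : Module ℂ M := Module.compHom M (algebraMap ℂ R)
  haveI : IsScalarTower ℂ R M := ⟨fun c r m => by
    show ((c • r) : R) • m = algebraMap ℂ R c • (r • m)
    rw [Algebra.smul_def, mul_smul]⟩
  haveI : Module.Finite ℂ M := Module.Finite.trans R M
  haveI : IsNoetherian R M := isNoetherian_of_tower ℂ inferInstance
  by_contra hne
  obtain ⟨C, ⟨hNC, hCne⟩, hmin⟩ := (IsNoetherian.wf ‹IsNoetherian R M›).has_min
    {B : Submodule R M | N ≤ B ∧ B ≠ ⊤} ⟨N, le_rfl, hne⟩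
  have hC : IsCoatom C := by
    refine ⟨hCne, fun D hD => ?_⟩
    by_contra hD'
    exact hmin D ⟨hNC.trans hD.le, hD'⟩ hD
  have h1 : modRad M ≤ C := sInf_le hC
  have : (⊤ : Submodule R M) ≤ C := h ▸ sup_le hNC h1
  exact hCne (top_le_iff.1 this)

/-- Surjectivity mod the radical implies surjectivity. -/
lemma surj_of_modRad [Algebra ℂ R] [FiniteDimensional ℂ R] {M N : ModuleCat.{u} R}
    (hfin : Module.Finite R N) (f : M →ₗ[R] N)
    (h : ∀ n : N, ∃ m : M, n - f m ∈ modRad N) : Function.Surjective f := by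
  have hsup : LinearMap.range f ⊔ modRad N = ⊤ := by
    rw [eq_top_iff]
    intro n _
    obtain ⟨m, hm⟩ := h n
    have : n = f m + (n - f m) := by abel
    rw [this]
    exact Submodule.add_mem_sup (LinearMap.mem_range_self f m) hm
  exact LinearMap.range_eq_top.1 (nakayama_modRad hfin hsup)

/-- The `ℂ`-module structure on an `R`-module when `R` is a `ℂ`-algebra. -/
def cmod [Algebra ℂ R] (M : ModuleCat.{u} R) : Module ℂ M :=
  Module.compHom M (algebraMap ℂ R)

/-- The `ℂ`-dimension of an `R`-module. -/
def cdim [Algebra ℂ R] (M : ModuleCat.{u} R) : ℕ :=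
  @Module.finrank ℂ M _ _ (cmod M)

lemma cdim_le_of_surjective [Algebra ℂ R] [FiniteDimensional ℂ R] {M N : ModuleCat.{u} R}
    (hM : Module.Finite R M) (f : M →ₗ[R] N) (hf : Function.Surjective f) : cdim N ≤ cdim M := by
  letI : Module ℂ M := cmod M
  letI : Module ℂ N := cmod N
  haveI : IsScalarTower ℂ R M := ⟨fun c r m => by
    show ((c • r) : R) • m = algebraMap ℂ R c • (r • m)
    rw [Algebra.smul_def, mul_smul]⟩
  haveI : Module.Finite ℂ M := Module.Finite.trans R M
  let fC : M →ₗ[ℂ] N := ⟨⟨⇑f, fun x y => f.map_add x y⟩, fun c x => f.map_smul (algebraMap ℂ R c) x⟩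
  have hr : LinearMap.range fC = ⊤ := LinearMap.range_eq_top.2 hf
  have h1 : Module.finrank ℂ (LinearMap.range fC) ≤ Module.finrank ℂ M :=
    LinearMap.finrank_range_le fC
  rw [hr] at h1
  rw [finrank_top] at h1
  exact h1

lemma cdim_ses [Algebra ℂ R] [FiniteDimensional ℂ R] {Y Z X : ModuleCat.{u} R}
    (hZ : Module.Finite R Z) (a : Y →ₗ[R] Z) (b : Z →ₗ[R] X)
    (hinj : Function.Injective a) (hsurj : Function.Surjective b)
    (hex : LinearMap.range a = LinearMap.ker b) : cdim Z = cdim X + cdim Y := by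
  letI : Module ℂ Y := cmod Y
  letI : Module ℂ Z := cmod Z
  letI : Module ℂ X := cmod X
  haveI : IsScalarTower ℂ R Z := ⟨fun c r m => by
    show ((c • r) : R) • m = algebraMap ℂ R c • (r • m)
    rw [Algebra.smul_def, mul_smul]⟩
  haveI : Module.Finite ℂ Z := Module.Finite.trans R Z
  let aC : Y →ₗ[ℂ] Z := ⟨⟨⇑a, fun x y => a.map_add x y⟩, fun c x => a.map_smul (algebraMap ℂ R c) x⟩
  let bC : Z →ₗ[ℂ] X := ⟨⟨⇑b, fun x y => b.map_add x y⟩, fun c x => b.map_smul (algebraMap ℂ R c) x⟩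
  have h1 : Module.finrank ℂ (LinearMap.range bC) + Module.finrank ℂ (LinearMap.ker bC)
      = Module.finrank ℂ Z := LinearMap.finrank_range_add_finrank_ker bC
  have hr : LinearMap.range bC = ⊤ := LinearMap.range_eq_top.2 hsurj
  have hrk : LinearMap.range aC = LinearMap.ker bC := by
    ext z
    have : z ∈ LinearMap.range a ↔ z ∈ LinearMap.ker b := by rw [hex]
    exact this
  have hker : Module.finrank ℂ (LinearMap.ker bC) = Module.finrank ℂ Y := by
    rw [← hrk]
    exact ((LinearEquiv.ofInjective aC hinj).finrank_eq).symm
  rw [hr, finrank_top, hker] at h1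
  exact h1.symm

lemma bij_of_surj_cdim_le [Algebra ℂ R] [FiniteDimensional ℂ R] {M N : ModuleCat.{u} R}
    (hM : Module.Finite R M) (hN : Module.Finite R N) (f : M →ₗ[R] N) (hf : Function.Surjective f)
    (h : cdim M ≤ cdim N) : Function.Bijective f := by
  have h' : cdim N ≤ cdim M := cdim_le_of_surjective hM f hf
  have heq : cdim M = cdim N := le_antisymm h h'
  letI : Module ℂ M := cmod M
  letI : Module ℂ N := cmod N
  haveI : IsScalarTower ℂ R M := ⟨fun c r m => by
    show ((c • r) : R) • m = algebraMap ℂ R c • (r • m)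
    rw [Algebra.smul_def, mul_smul]⟩
  haveI : IsScalarTower ℂ R N := ⟨fun c r m => by
    show ((c • r) : R) • m = algebraMap ℂ R c • (r • m)
    rw [Algebra.smul_def, mul_smul]⟩
  haveI : Module.Finite ℂ M := Module.Finite.trans R M
  haveI : Module.Finite ℂ N := Module.Finite.trans R N
  let fC : M →ₗ[ℂ] N := ⟨⟨⇑f, fun x y => f.map_add x y⟩, fun c x => f.map_smul (algebraMap ℂ R c) x⟩
  have hinj : Function.Injective fC :=
    (LinearMap.injective_iff_surjective_of_finrank_eq_finrank heq).2 hf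
  exact ⟨hinj, hf⟩

lemma cdim_prod [Algebra ℂ R] [FiniteDimensional ℂ R] {M N : ModuleCat.{u} R}
    (hM : Module.Finite R M) (hN : Module.Finite R N) :
    cdim (ModuleCat.of R (M × N)) = cdim M + cdim N := by
  letI i1 : Module ℂ M := cmod M
  letI i2 : Module ℂ N := cmod N
  haveI : IsScalarTower ℂ R M := ⟨fun c r m => by
    show ((c • r) : R) • m = algebraMap ℂ R c • (r • m)
    rw [Algebra.smul_def, mul_smul]⟩
  haveI : IsScalarTower ℂ R N := ⟨fun c r m => by
    show ((c • r) : R) • m = algebraMap ℂ R c • (r • m)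
    rw [Algebra.smul_def, mul_smul]⟩
  haveI : Module.Finite ℂ M := Module.Finite.trans R M
  haveI : Module.Finite ℂ N := Module.Finite.trans R N
  have e : @LinearEquiv ℂ ℂ _ _ (RingHom.id ℂ) (RingHom.id ℂ) _ _
      (M × N) (M × N) _ _ (cmod (ModuleCat.of R (M × N))) (Prod.instModule) :=
    { toFun := id, invFun := id, map_add' := fun _ _ => rfl,
      map_smul' := fun c p => rfl,
      left_inv := fun _ => rfl, right_inv := fun _ => rfl }
  have h1 : cdim (ModuleCat.of R (M × N))
      = @Module.finrank ℂ (M × N) _ _ (Prod.instModule) := e.finrank_eq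
  rw [h1, Module.finrank_prod]
  rfl

lemma hom_congr_apply {M N : ModuleCat.{u} R} {f g : M ⟶ N} (h : f = g) (x : M) : f x = g x := by
  rw [h]

/-- A morphism of two-periodic complexes with bijective components is an isomorphism. -/
def isoOfBij {X Y : TwoCx R} (f : X ⟶ Y) (h1 : Function.Bijective f.f1)
    (h0 : Function.Bijective f.f0) : X ≅ Y := by
  let e1 := LinearEquiv.ofBijective f.f1.hom h1
  let e0 := LinearEquiv.ofBijective f.f0.hom h0
  have hc1 : ∀ x, f.f0 (X.d1 x) = Y.d1 (f.f1 x) := fun x => hom_congr_apply f.comm1 x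
  have hc0 : ∀ x, f.f1 (X.d0 x) = Y.d0 (f.f0 x) := fun x => hom_congr_apply f.comm0 x
  refine ⟨f, ⟨ModuleCat.ofHom e1.symm.toLinearMap, ModuleCat.ofHom e0.symm.toLinearMap, ?_, ?_⟩, ?_, ?_⟩
  · refine ModuleCat.hom_ext (LinearMap.ext fun y => ?_)
    show e0.symm (Y.d1 y) = X.d1 (e1.symm y)
    apply e0.injective
    rw [e0.apply_symm_apply]
    show _ = f.f0 (X.d1 (e1.symm y))
    rw [hc1]
    show Y.d1 y = Y.d1 (e1 (e1.symm y))
    rw [e1.apply_symm_apply]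
  · refine ModuleCat.hom_ext (LinearMap.ext fun y => ?_)
    show e1.symm (Y.d0 y) = X.d0 (e0.symm y)
    apply e1.injective
    rw [e1.apply_symm_apply]
    show _ = f.f1 (X.d0 (e0.symm y))
    rw [hc0]
    show Y.d0 y = Y.d0 (e0 (e0.symm y))
    rw [e0.apply_symm_apply]
  · refine hom_ext ?_ ?_
    · refine ModuleCat.hom_ext (LinearMap.ext fun x => ?_)
      show e1.symm (f.f1 x) = x
      exact e1.symm_apply_apply x
    · refine ModuleCat.hom_ext (LinearMap.ext fun x => ?_)
      show e0.symm (f.f0 x) = x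
      exact e0.symm_apply_apply x
  · refine hom_ext ?_ ?_
    · refine ModuleCat.hom_ext (LinearMap.ext fun y => ?_)
      show f.f1 (e1.symm y) = y
      exact e1.apply_symm_apply y
    · refine ModuleCat.hom_ext (LinearMap.ext fun y => ?_)
      show f.f0 (e0.symm y) = y
      exact e0.apply_symm_apply y

end Statement8Helpers


/-- If `X`, `Y` are radical, `Z` is contractible and there is a short exact
sequence `0 → Y → Z → X → 0` in `C₂(P)`, then `Y ≅ X^*` and `Z ≅ K_{X¹} ⊕ K^*_{X⁰}`. -/
theorem statement_8 {A : Type u} [Ring A] [Algebra ℂ A] [FiniteDimensional ℂ A]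
    (X Y Z : TwoCx Aᵐᵒᵖ) (hX : RadicalCx X) (hY : RadicalCx Y) (hZ : Contractible Z)
    (s : SESData Y Z X) :
    Nonempty (Y ≅ starCx X) ∧
    Nonempty (Z ≅ dsum (kP X.X1 X.fin1 X.proj1) (kS X.X0 X.fin0 X.proj0)) := by
  haveI : Module.Finite ℂ Aᵐᵒᵖ := Module.Finite.equiv (MulOpposite.opLinearEquiv ℂ)
  -- homotopy data
  obtain ⟨H1, H0, he1, he0⟩ := hZ
  simp only [id_f1, id_f0, zero_f1, zero_f0, sub_zero] at he1 he0
  have hid1 : ∀ z : Z.X1, Z.d0 (H1 z) + H0 (Z.d1 z) = z := fun z => by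
    exact (hom_congr_apply he1 z).symm
  have hid0 : ∀ z : Z.X0, Z.d1 (H0 z) + H1 (Z.d0 z) = z := fun z => by
    exact (hom_congr_apply he0 z).symm
  have hid1a : ∀ z : Z.X1, H0 (Z.d1 z) = z - Z.d0 (H1 z) := fun z => eq_sub_of_add_eq' (hid1 z)
  have hid1b : ∀ z : Z.X1, Z.d0 (H1 z) = z - H0 (Z.d1 z) := fun z => eq_sub_of_add_eq (hid1 z)
  have hid0a : ∀ z : Z.X0, H1 (Z.d0 z) = z - Z.d1 (H0 z) := fun z => eq_sub_of_add_eq' (hid0 z)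
  have hid0b : ∀ z : Z.X0, Z.d1 (H0 z) = z - H1 (Z.d0 z) := fun z => eq_sub_of_add_eq (hid0 z)
  -- pointwise commutation for a and b
  have ha1 : ∀ y, s.a.f0 (Y.d1 y) = Z.d1 (s.a.f1 y) := fun y => by
    exact hom_congr_apply s.a.comm1 y
  have ha0 : ∀ y, s.a.f1 (Y.d0 y) = Z.d0 (s.a.f0 y) := fun y => by
    exact hom_congr_apply s.a.comm0 y
  have hb1 : ∀ z, s.b.f0 (Z.d1 z) = X.d1 (s.b.f1 z) := fun z => by
    exact hom_congr_apply s.b.comm1 z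
  have hb0 : ∀ z, s.b.f1 (Z.d0 z) = X.d0 (s.b.f0 z) := fun z => by
    exact hom_congr_apply s.b.comm0 z
  have hab1 : ∀ y, s.b.f1 (s.a.f1 y) = 0 := fun y => by
    have h := LinearMap.mem_range_self s.a.f1.hom y
    rw [s.exact1] at h
    exact LinearMap.mem_ker.mp h
  have hab0 : ∀ y, s.b.f0 (s.a.f0 y) = 0 := fun y => by
    have h := LinearMap.mem_range_self s.a.f0.hom y
    rw [s.exact0] at h
    exact LinearMap.mem_ker.mp h
  have hZ10 : ∀ m, Z.d1 (Z.d0 m) = 0 := fun m => by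
    exact hom_congr_apply Z.dd0 m
  have hZ01 : ∀ m, Z.d0 (Z.d1 m) = 0 := fun m => by
    exact hom_congr_apply Z.dd1 m
  -- splittings of b
  haveI := X.proj1; haveI := X.proj0
  obtain ⟨σ1, hσ1⟩ := Module.projective_lifting_property s.b.f1.hom LinearMap.id s.surj1
  have hσ1' : ∀ x, s.b.f1 (σ1 x) = x := fun x => by
    exact DFunLike.congr_fun hσ1 x
  obtain ⟨σ0, hσ0⟩ := Module.projective_lifting_property s.b.f0.hom LinearMap.id s.surj0
  have hσ0' : ∀ x, s.b.f0 (σ0 x) = x := fun x => by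
    exact DFunLike.congr_fun hσ0 x
  -- the map ψ : Y ⟶ X^*
  let ψ1 : Y.X1 ⟶ X.X0 := s.a.f1 ≫ H1 ≫ s.b.f0
  let ψ0 : Y.X0 ⟶ X.X1 := s.a.f0 ≫ H0 ≫ s.b.f1
  have hψ1 : ∀ y, ψ1 y = s.b.f0 (H1 (s.a.f1 y)) := fun y => rfl
  have hψ0 : ∀ y, ψ0 y = s.b.f1 (H0 (s.a.f0 y)) := fun y => rfl
  have ψcomm1 : Y.d1 ≫ ψ0 = ψ1 ≫ (starCx X).d1 := by
    refine ModuleCat.hom_ext (LinearMap.ext fun y => ?_)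
    show s.b.f1 (H0 (s.a.f0 (Y.d1 y))) = (-X.d0) (s.b.f0 (H1 (s.a.f1 y)))
    rw [ha1, hid1a, map_sub, hab1, hb0, zero_sub]
    rfl
  have ψcomm0 : Y.d0 ≫ ψ1 = ψ0 ≫ (starCx X).d0 := by
    refine ModuleCat.hom_ext (LinearMap.ext fun y => ?_)
    show s.b.f0 (H1 (s.a.f1 (Y.d0 y))) = (-X.d1) (s.b.f1 (H0 (s.a.f0 y)))
    rw [ha0, hid0a, map_sub, hab0, hb1, zero_sub]
    rfl
  let ψhom : Y ⟶ starCx X := ⟨ψ1, ψ0, ψcomm1, ψcomm0⟩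
  -- ψ is surjective in both degrees
  have hψ1surj : Function.Surjective ψ1 := by
    refine surj_of_modRad X.fin0 ψ1.hom fun x0 => ?_
    obtain ⟨z0, hz0'⟩ := s.surj0 x0
    have hker : Z.d0 z0 - σ1 (X.d0 x0) ∈ LinearMap.ker s.b.f1.hom := by
      rw [LinearMap.mem_ker, map_sub, hb0, hz0', hσ1', sub_self]
    rw [← s.exact1] at hker
    obtain ⟨y, hy⟩ := hker
    refine ⟨y, ?_⟩
    have hx0 : x0 = X.d1 (s.b.f1 (H0 z0)) + s.b.f0 (H1 (Z.d0 z0)) := by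
      conv_lhs => rw [← hz0']
      conv_lhs => rw [← hid0 z0]
      rw [map_add, hb1]
    have hψy : ψ1 y = s.b.f0 (H1 (Z.d0 z0)) - s.b.f0 (H1 (σ1 (X.d0 x0))) := by
      rw [hψ1, hy, map_sub, map_sub]
    have hx0' : s.b.f0 (H1 (Z.d0 z0)) = x0 - X.d1 (s.b.f1 (H0 z0)) := by
      rw [hx0]; abel
    have hfin : x0 - ψ1 y = X.d1 (s.b.f1 (H0 z0)) + s.b.f0 (H1 (σ1 (X.d0 x0))) := by
      rw [hψy, hx0']
      abel
    rw [hfin]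
    refine Submodule.add_mem _ (hX.1 (LinearMap.mem_range_self _ _)) ?_
    exact map_mem_modRad s.b.f0.hom (map_mem_modRad H1.hom (map_mem_modRad σ1
      (hX.2 (LinearMap.mem_range_self _ _))))
  have hψ0surj : Function.Surjective ψ0 := by
    refine surj_of_modRad X.fin1 ψ0.hom fun x1 => ?_
    obtain ⟨z1, hz1'⟩ := s.surj1 x1
    have hker : Z.d1 z1 - σ0 (X.d1 x1) ∈ LinearMap.ker s.b.f0.hom := by
      rw [LinearMap.mem_ker, map_sub, hb1, hz1', hσ0', sub_self]
    rw [← s.exact0] at hker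
    obtain ⟨y, hy⟩ := hker
    refine ⟨y, ?_⟩
    have hx1 : x1 = X.d0 (s.b.f0 (H1 z1)) + s.b.f1 (H0 (Z.d1 z1)) := by
      conv_lhs => rw [← hz1']
      conv_lhs => rw [← hid1 z1]
      rw [map_add, hb0]
    have hψy : ψ0 y = s.b.f1 (H0 (Z.d1 z1)) - s.b.f1 (H0 (σ0 (X.d1 x1))) := by
      rw [hψ0, hy, map_sub, map_sub]
    have hx1' : s.b.f1 (H0 (Z.d1 z1)) = x1 - X.d0 (s.b.f0 (H1 z1)) := by
      rw [hx1]; abel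
    have hfin : x1 - ψ0 y = X.d0 (s.b.f0 (H1 z1)) + s.b.f1 (H0 (σ0 (X.d1 x1))) := by
      rw [hψy, hx1']
      abel
    rw [hfin]
    refine Submodule.add_mem _ (hX.2 (LinearMap.mem_range_self _ _)) ?_
    exact map_mem_modRad s.b.f1.hom (map_mem_modRad H0.hom (map_mem_modRad σ0
      (hX.1 (LinearMap.mem_range_self _ _))))
  -- the map ρ : K_{X1} ⊕ K*_{X0} ⟶ Z
  let W := dsum (kP X.X1 X.fin1 X.proj1) (kS X.X0 X.fin0 X.proj0)
  let P1 : ModuleCat.{u} Aᵐᵒᵖ := ModuleCat.of Aᵐᵒᵖ (X.X1 × X.X0)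
  let ρ1 : P1 ⟶ Z.X1 :=
    ModuleCat.ofHom (σ1 ∘ₗ LinearMap.fst Aᵐᵒᵖ X.X1 X.X0 + (Z.d0.hom ∘ₗ σ0) ∘ₗ LinearMap.snd Aᵐᵒᵖ X.X1 X.X0)
  let ρ0 : P1 ⟶ Z.X0 :=
    ModuleCat.ofHom ((Z.d1.hom ∘ₗ σ1) ∘ₗ LinearMap.fst Aᵐᵒᵖ X.X1 X.X0 + σ0 ∘ₗ LinearMap.snd Aᵐᵒᵖ X.X1 X.X0)
  have hρ1 : ∀ p : X.X1 × X.X0, ρ1 p = σ1 p.1 + Z.d0 (σ0 p.2) := fun p => rfl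
  have hρ0 : ∀ p : X.X1 × X.X0, ρ0 p = Z.d1 (σ1 p.1) + σ0 p.2 := fun p => rfl
  have hWd1 : ∀ p : X.X1 × X.X0, W.d1 p = (p.1, 0) := fun p => rfl
  have hWd0 : ∀ p : X.X1 × X.X0, W.d0 p = (0, p.2) := fun p => rfl
  have ρcomm1 : W.d1 ≫ ρ0 = ρ1 ≫ Z.d1 := by
    refine ModuleCat.hom_ext (LinearMap.ext fun p => ?_)
    show ρ0 (W.d1 p) = Z.d1 (ρ1 p)
    show Z.d1 (σ1 p.1) + σ0 (0 : X.X0) = Z.d1 (σ1 p.1 + Z.d0 (σ0 p.2))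
    simp [hρ0, hρ1, hZ10]
  have ρcomm0 : W.d0 ≫ ρ1 = ρ0 ≫ Z.d0 := by
    refine ModuleCat.hom_ext (LinearMap.ext fun p => ?_)
    show ρ1 (W.d0 p) = Z.d0 (ρ0 p)
    show σ1 (0 : X.X1) + Z.d0 (σ0 p.2) = Z.d0 (Z.d1 (σ1 p.1) + σ0 p.2)
    simp [hρ1, hρ0, hZ01]
  let ρhom : W ⟶ Z := ⟨ρ1, ρ0, ρcomm1, ρcomm0⟩
  -- ρ is surjective in both degrees
  have hρ1surj : Function.Surjective ρ1 := by
    refine surj_of_modRad Z.fin1 ρ1.hom fun z1 => ?_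
    have hker : z1 - σ1 (s.b.f1 z1) ∈ LinearMap.ker s.b.f1.hom := by
      rw [LinearMap.mem_ker, map_sub, hσ1', sub_self]
    rw [← s.exact1] at hker
    obtain ⟨y, hy⟩ := hker
    have hker2 : σ0 (ψ1 y) - H1 (s.a.f1 y) ∈ LinearMap.ker s.b.f0.hom := by
      rw [LinearMap.mem_ker, map_sub, hσ0', hψ1, sub_self]
    rw [← s.exact0] at hker2
    obtain ⟨u, hu⟩ := hker2
    refine ⟨(s.b.f1 z1, ψ1 y), ?_⟩
    have e1 : σ0 (ψ1 y) = H1 (s.a.f1 y) + s.a.f0 u := by rw [hu]; abel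
    have e2 : Z.d0 (σ0 (ψ1 y)) = (s.a.f1 y - H0 (s.a.f0 (Y.d1 y))) + s.a.f1 (Y.d0 u) := by
      rw [e1, map_add, ← ha0 u, hid1b (s.a.f1 y), ← ha1 y]
    have key : z1 - ρ1 (s.b.f1 z1, ψ1 y) = H0 (s.a.f0 (Y.d1 y)) - s.a.f1 (Y.d0 u) := by
      simp only [hρ1]
      rw [e2, hy]
      abel
    rw [key]
    refine Submodule.sub_mem _ ?_ ?_
    · exact map_mem_modRad H0.hom (map_mem_modRad s.a.f0.hom (hY.1 (LinearMap.mem_range_self _ _)))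
    · exact map_mem_modRad s.a.f1.hom (hY.2 (LinearMap.mem_range_self _ _))
  have hρ0surj : Function.Surjective ρ0 := by
    refine surj_of_modRad Z.fin0 ρ0.hom fun z0 => ?_
    have hker : z0 - σ0 (s.b.f0 z0) ∈ LinearMap.ker s.b.f0.hom := by
      rw [LinearMap.mem_ker, map_sub, hσ0', sub_self]
    rw [← s.exact0] at hker
    obtain ⟨y, hy⟩ := hker
    have hker2 : σ1 (ψ0 y) - H0 (s.a.f0 y) ∈ LinearMap.ker s.b.f1.hom := by
      rw [LinearMap.mem_ker, map_sub, hσ1', hψ0, sub_self]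
    rw [← s.exact1] at hker2
    obtain ⟨u, hu⟩ := hker2
    refine ⟨(ψ0 y, s.b.f0 z0), ?_⟩
    have e1 : σ1 (ψ0 y) = H0 (s.a.f0 y) + s.a.f1 u := by rw [hu]; abel
    have e2 : Z.d1 (σ1 (ψ0 y)) = (s.a.f0 y - H1 (s.a.f1 (Y.d0 y))) + s.a.f0 (Y.d1 u) := by
      rw [e1, map_add, ← ha1 u, hid0b (s.a.f0 y), ← ha0 y]
    have key : z0 - ρ0 (ψ0 y, s.b.f0 z0) = H1 (s.a.f1 (Y.d0 y)) - s.a.f0 (Y.d1 u) := by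
      simp only [hρ0]
      rw [e2, hy]
      abel
    rw [key]
    refine Submodule.sub_mem _ ?_ ?_
    · exact map_mem_modRad H1.hom (map_mem_modRad s.a.f1.hom (hY.2 (LinearMap.mem_range_self _ _)))
    · exact map_mem_modRad s.a.f0.hom (hY.1 (LinearMap.mem_range_self _ _))
  -- dimension count
  have hP1fin : Module.Finite Aᵐᵒᵖ P1 := by
    haveI := X.fin1; haveI := X.fin0
    exact (inferInstance : Module.Finite Aᵐᵒᵖ (X.X1 × X.X0))
  have dZ1 : cdim Z.X1 = cdim X.X1 + cdim Y.X1 :=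
    cdim_ses Z.fin1 s.a.f1.hom s.b.f1.hom s.inj1 s.surj1 s.exact1
  have dZ0 : cdim Z.X0 = cdim X.X0 + cdim Y.X0 :=
    cdim_ses Z.fin0 s.a.f0.hom s.b.f0.hom s.inj0 s.surj0 s.exact0
  have i1 : cdim X.X0 ≤ cdim Y.X1 := cdim_le_of_surjective Y.fin1 ψ1.hom hψ1surj
  have i0 : cdim X.X1 ≤ cdim Y.X0 := cdim_le_of_surjective Y.fin0 ψ0.hom hψ0surj
  have j1 : cdim Z.X1 ≤ cdim P1 := cdim_le_of_surjective hP1fin ρ1.hom hρ1surj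
  have j0 : cdim Z.X0 ≤ cdim P1 := cdim_le_of_surjective hP1fin ρ0.hom hρ0surj
  have hP1dim : cdim P1 = cdim X.X1 + cdim X.X0 := cdim_prod X.fin1 X.fin0
  rw [hP1dim] at j1 j0
  have e1dim : cdim Y.X1 = cdim X.X0 := by omega
  have e0dim : cdim Y.X0 = cdim X.X1 := by omega
  -- bijectivity
  have hψ1bij : Function.Bijective ψ1 :=
    bij_of_surj_cdim_le Y.fin1 X.fin0 ψ1.hom hψ1surj (le_of_eq e1dim)
  have hψ0bij : Function.Bijective ψ0 :=
    bij_of_surj_cdim_le Y.fin0 X.fin1 ψ0.hom hψ0surj (le_of_eq e0dim)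
  have hρ1bij : Function.Bijective ρ1 :=
    bij_of_surj_cdim_le hP1fin Z.fin1 ρ1.hom hρ1surj (by omega)
  have hρ0bij : Function.Bijective ρ0 :=
    bij_of_surj_cdim_le hP1fin Z.fin0 ρ0.hom hρ0surj (by omega)
  exact ⟨⟨isoOfBij ψhom hψ1bij hψ0bij⟩, ⟨(isoOfBij ρhom hρ1bij hρ0bij).symm⟩⟩
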